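/- For any word \underline{w} = s₁⋯s_m in S, ε(\underline{H}_{s₁}⋯\underline{H}_{s_m}) = Σ v^{d(e)}, where the sum runs over all 01-sequences e of length m whose associated subsequence expresses the identity element of W. -/

import Mathlib

open LaurentPolynomial
open scoped Classical

/-- The Bruhat stroll associated to a word `s₁⋯s_m` and a 01-sequence `e`:
`x_i = s₁^{e₁}⋯s_i^{e_i}`. -/
def stroll {B W : Type*} [Group W] {M : CoxeterMatrix B} (cs : CoxeterSystem M W)
    {m : ℕ} (s : Fin m → B) (e : Fin m → Bool) (i : ℕ) : W :=
  ((List.ofFn (fun j : Fin m => if e j then cs.simple (s j) else 1)).take i).prod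

/-- The defect of a 01-sequence `e`. -/
noncomputable def defect {B W : Type*} [Group W] {M : CoxeterMatrix B}
    (cs : CoxeterSystem M W) {m : ℕ} (s : Fin m → B) (e : Fin m → Bool) : ℤ :=
  ∑ i : Fin m, if e i then 0 else
    (if cs.length (stroll cs s e i.val * cs.simple (s i)) > cs.length (stroll cs s e i.val)
      then 1 else -1)

lemma stroll_castSucc {B W : Type*} [Group W] {M : CoxeterMatrix B} (cs : CoxeterSystem M W)
    {m : ℕ} (s : Fin (m + 1) → B) (e : Fin (m + 1) → Bool) {i : ℕ} (hi : i ≤ m) :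
    stroll cs s e i = stroll cs (fun j => s j.castSucc) (fun j => e j.castSucc) i := by
  unfold stroll
  rw [List.ofFn_succ', List.concat_eq_append,
    List.take_append_of_le_length (by simpa using hi)]

lemma stroll_last {B W : Type*} [Group W] {M : CoxeterMatrix B} (cs : CoxeterSystem M W)
    {m : ℕ} (s : Fin (m + 1) → B) (e : Fin (m + 1) → Bool) :
    stroll cs s e (m + 1) = stroll cs s e m *
      (if e (Fin.last m) then cs.simple (s (Fin.last m)) else 1) := by
  unfold stroll
  rw [List.ofFn_succ', List.concat_eq_append]
  set l := List.ofFn fun i : Fin m =>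
    if e i.castSucc then cs.simple (s i.castSucc) else 1 with hl
  have h1 : (l ++ [if e (Fin.last m) then cs.simple (s (Fin.last m)) else 1]).take (m + 1) =
      l ++ [if e (Fin.last m) then cs.simple (s (Fin.last m)) else 1] :=
    List.take_of_length_le (by simp [hl])
  have h2 : (l ++ [if e (Fin.last m) then cs.simple (s (Fin.last m)) else 1]).take m = l := by
    rw [List.take_append_of_le_length (by simp [hl]), List.take_of_length_le (by simp [hl])]
  rw [h1, h2, List.prod_append, List.prod_singleton]

lemma defect_split {B W : Type*} [Group W] {M : CoxeterMatrix B} (cs : CoxeterSystem M W)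
    {m : ℕ} (s : Fin (m + 1) → B) (e : Fin (m + 1) → Bool) :
    defect cs s e = defect cs (fun j => s j.castSucc) (fun j => e j.castSucc) +
      (if e (Fin.last m) then 0 else
        if cs.length (stroll cs s e m * cs.simple (s (Fin.last m))) >
            cs.length (stroll cs s e m) then 1 else -1) := by
  unfold defect
  rw [Fin.sum_univ_castSucc]
  congr 1
  refine Finset.sum_congr rfl fun i _ => ?_
  simp only [Fin.coe_castSucc,
    stroll_castSucc cs s e (le_of_lt i.isLt)]

lemma ite_true_bool {α : Sort*} (a c : α) : (if (true : Bool) = true then a else c) = a :=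
  if_pos rfl

lemma ite_false_bool {α : Sort*} (a c : α) : (if (false : Bool) = true then a else c) = c :=
  if_neg (by simp)

theorem trace_defect_formula {B W : Type*} [Group W] {M : CoxeterMatrix B}
    (cs : CoxeterSystem M W)
    (A : Type*) [Ring A] [Algebra (LaurentPolynomial ℤ) A]
    (b : Module.Basis W (LaurentPolynomial ℤ) A) (hb1 : b 1 = 1)
    (hmul_gt : ∀ (w : W) (i : B), cs.length (w * cs.simple i) > cs.length w →
      b w * b (cs.simple i) = b (w * cs.simple i))
    (hmul_lt : ∀ (w : W) (i : B), cs.length (w * cs.simple i) < cs.length w →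
      b w * b (cs.simple i) = b (w * cs.simple i) +
        algebraMap (LaurentPolynomial ℤ) A (T (-1) - T 1) * b w)
    (m : ℕ) (s : Fin m → B) :
    b.repr ((List.ofFn (fun i : Fin m =>
        b (cs.simple (s i)) + algebraMap (LaurentPolynomial ℤ) A (T 1))).prod) 1 =
      ∑ e : Fin m → Bool, if stroll cs s e m = 1 then T (defect cs s e) else 0 := by
  have key : ∀ (m : ℕ) (s : Fin m → B),
      (List.ofFn (fun i : Fin m =>
        b (cs.simple (s i)) + algebraMap (LaurentPolynomial ℤ) A (T 1))).prod =
      ∑ e : Fin m → Bool, (T (defect cs s e) : LaurentPolynomial ℤ) • b (stroll cs s e m) := by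
    intro m
    induction m with
    | zero =>
      intro s
      rw [Fintype.sum_unique]
      simp [stroll, defect, hb1]
    | succ m ih =>
      intro s
      rw [List.ofFn_succ', List.concat_eq_append, List.prod_append, List.prod_singleton,
        ih (fun j => s j.castSucc), Finset.sum_mul,
        ← (Fin.snocEquiv fun _ => Bool).sum_comp
          (fun e => T (defect cs s e) • b (stroll cs s e (m + 1))),
        Fintype.sum_prod_type, Finset.sum_comm]
      refine Finset.sum_congr rfl fun e' _ => ?_
      rw [Fintype.sum_bool]
      have hcomp : ∀ c : Bool,
          (fun j : Fin m => (Fin.snocEquiv fun _ => Bool) (c, e') j.castSucc) = e' := by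
        intro c; funext j; simp [Fin.snocEquiv, Fin.snoc_castSucc]
      have hlast : ∀ c : Bool, (Fin.snocEquiv fun _ => Bool) (c, e') (Fin.last m) = c := by
        intro c; simp [Fin.snocEquiv, Fin.snoc_last]
      have hstroll : ∀ c : Bool,
          stroll cs s ((Fin.snocEquiv fun _ => Bool) (c, e')) m =
            stroll cs (fun j => s j.castSucc) e' m := by
        intro c
        rw [stroll_castSucc cs s _ (le_refl m), hcomp c]
      have hstroll1 : ∀ c : Bool,
          stroll cs s ((Fin.snocEquiv fun _ => Bool) (c, e')) (m + 1) =
            stroll cs (fun j => s j.castSucc) e' m *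
              (if c then cs.simple (s (Fin.last m)) else 1) := by
        intro c
        rw [stroll_last, hstroll c, hlast c]
      have hdef : ∀ c : Bool,
          defect cs s ((Fin.snocEquiv fun _ => Bool) (c, e')) =
            defect cs (fun j => s j.castSucc) e' +
            (if c then 0 else
              if cs.length (stroll cs (fun j => s j.castSucc) e' m *
                  cs.simple (s (Fin.last m))) >
                  cs.length (stroll cs (fun j => s j.castSucc) e' m) then 1 else -1) := by
        intro c
        rw [defect_split, hcomp c, hlast c, hstroll c]
      set x := stroll cs (fun j => s j.castSucc) e' m with hx
      set d := defect cs (fun j => s j.castSucc) e' with hd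
      rw [hstroll1 true, hstroll1 false, hdef true, hdef false]
      simp only [ite_true_bool, ite_false_bool, eq_self_iff_true, if_true,
        show (false = true) = False from by simp, if_false, mul_one, add_zero]
      rcases cs.length_mul_simple x (s (Fin.last m)) with h | h
      · have hgt : cs.length (x * cs.simple (s (Fin.last m))) > cs.length x := by
          rw [h]; exact Nat.lt_succ_self _
        rw [if_pos hgt, mul_add, smul_mul_assoc, hmul_gt x _ hgt]
        congr 1
        rw [Algebra.smul_def, Algebra.smul_def, mul_assoc,
          ← Algebra.commutes (T 1) (b x), ← mul_assoc, ← map_mul]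
        congr 1
        rw [T_add]
      · have hlt : cs.length (x * cs.simple (s (Fin.last m))) < cs.length x := by
          rw [← h]; exact Nat.lt_succ_self _
        rw [if_neg (lt_asymm hlt), mul_add, smul_mul_assoc, hmul_lt x _ hlt, smul_add,
          add_assoc]
        congr 1
        rw [Algebra.smul_def, Algebra.smul_def, Algebra.smul_def, mul_assoc,
          ← Algebra.commutes (T 1) (b x), ← mul_assoc, ← mul_assoc, ← map_mul,
          ← map_mul, ← add_mul, ← map_add]
        congr 1
        rw [T_add]
        ring
  rw [key m s, map_sum, Finset.sum_apply']
  refine Finset.sum_congr rfl fun e _ => ?_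
  rw [map_smul, Module.Basis.repr_self, Finsupp.smul_apply, Finsupp.single_apply]
  split <;> simp
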